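/- For a rooted bifurcating tree T with n leaves, C(T) = 0 if and only if n is a power of 2 and T is the fully symmetric tree of height log₂(n). -/
import Mathlib


inductive BTree where
  | leaf : BTree
  | node : BTree → BTree → BTree
deriving DecidableEq

def BTree.leaves : BTree → ℕ
  | .leaf => 1
  | .node l r => l.leaves + r.leaves

def BTree.colless : BTree → ℕ
  | .leaf => 0
  | .node l r => l.colless + r.colless + (max l.leaves r.leaves - min l.leaves r.leaves)

/-- The fully symmetric bifurcating tree of height `k`, with `2^k` leaves. -/
def fullSym : ℕ → BTree
  | 0 => .leaf
  | k + 1 => .node (fullSym k) (fullSym k)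

lemma fullSym_colless (k : ℕ) : (fullSym k).colless = 0 := by
  induction k with
  | zero => rfl
  | succ n ih => simp [fullSym, BTree.colless, ih]

theorem colless_eq_zero_iff_fullSym (T : BTree) :
    T.colless = 0 ↔ ∃ k : ℕ, T.leaves = 2 ^ k ∧ T = fullSym k := by
  induction T with
  | leaf =>
    constructor
    · intro _; exact ⟨0, rfl, rfl⟩
    · intro _; rfl
  | node l r ihl ihr =>
    constructor
    · intro h
      simp only [BTree.colless] at h
      obtain ⟨hl, hr, heq⟩ : l.colless = 0 ∧ r.colless = 0 ∧
          max l.leaves r.leaves - min l.leaves r.leaves = 0 := by omega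
      obtain ⟨k, hk, rfl⟩ := ihl.mp hl
      obtain ⟨m, hm, rfl⟩ := ihr.mp hr
      have : k = m := by
        have h2 : (2:ℕ)^k = 2^m := by
          rw [hk, hm] at heq
          have h1 := Nat.sub_eq_zero_iff_le.mp heq
          have h3 := le_max_left ((2:ℕ)^k) (2^m)
          have h4 := le_max_right ((2:ℕ)^k) (2^m)
          have h5 := min_le_left ((2:ℕ)^k) (2^m)
          have h6 := min_le_right ((2:ℕ)^k) (2^m)
          omega
        exact Nat.pow_right_injective (le_refl 2) h2
      subst this
      exact ⟨k + 1, by simp [BTree.leaves, hk, pow_succ]; ring, rfl⟩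
    · rintro ⟨k, hk, heq⟩
      rw [heq]; exact fullSym_colless k
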